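/- An expansive compact metric dynamical system (X,T) is hereditarily almost equicontinuous (HAE) if and only if X is countable. In particular, a subshift (a nonempty closed shift-invariant subset of {0,1}^ℤ with the shift) is HAE if and only if it is countable. -/

import Mathlib

open Filter Topology

/-- The `n`-th iterate (for `n : ℤ`) of a homeomorphism `T`. -/
def hIter {X : Type*} [TopologicalSpace X] (T : X ≃ₜ X) (n : ℤ) : X → X :=
  fun x => (T.toEquiv ^ n) x

/-- `x` is an equicontinuity point of the subsystem on `Y`, with respect to the
distance function `d` and the iterates `Tn`. -/
def EqPt {X : Type*} (d : X → X → ℝ) (Tn : ℤ → X → X) (Y : Set X) (x : X) : Prop :=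
  ∀ ε > (0 : ℝ), ∃ δ > (0 : ℝ), ∀ y ∈ Y, d x y < δ → ∀ n : ℤ, d (Tn n x) (Tn n y) < ε

/-- The subsystem on `Y` is almost equicontinuous: its equicontinuity points are dense in `Y`. -/
def AEOn {X : Type*} [TopologicalSpace X] (d : X → X → ℝ) (Tn : ℤ → X → X) (Y : Set X) : Prop :=
  Y ⊆ closure {x ∈ Y | EqPt d Tn Y x}

/-- The subsystem of `(X,T)` on `Z` is hereditarily almost equicontinuous: every nonempty
closed invariant subset of `Z` is almost equicontinuous. -/
def HAEOn {X : Type*} [TopologicalSpace X] (d : X → X → ℝ) (T : X ≃ₜ X) (Z : Set X) : Prop :=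
  ∀ Y ⊆ Z, Y.Nonempty → IsClosed Y → ⇑T '' Y = Y → AEOn d (hIter T) Y

/-- The shift homeomorphism on `{0,1}^ℤ`. -/
def shiftH : (ℤ → Bool) ≃ₜ (ℤ → Bool) where
  toFun x := fun n => x (n + 1)
  invFun x := fun n => x (n - 1)
  left_inv x := by funext n; simp
  right_inv x := by funext n; simp
  continuous_toFun := continuous_pi fun n => continuous_apply (n + 1)
  continuous_invFun := continuous_pi fun n => continuous_apply (n - 1)

/-- The standard metric on `{0,1}^ℤ`: `d(x,y) = inf {2^{-N} : x_t = y_t for all |t| < N}`. -/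
noncomputable def bdist (x y : ℤ → Bool) : ℝ :=
  sInf {r : ℝ | ∃ N : ℕ, (∀ t : ℤ, |t| < (N : ℤ) → x t = y t) ∧ r = (2 : ℝ) ^ (-(N : ℤ))}

lemma bset_bdd (x y : ℤ → Bool) :
    BddBelow {r : ℝ | ∃ N : ℕ, (∀ t : ℤ, |t| < (N : ℤ) → x t = y t) ∧ r = (2 : ℝ) ^ (-(N : ℤ))} :=
  ⟨0, fun r ⟨N, _, hr⟩ => hr ▸ by positivity⟩

lemma bset_one (x y : ℤ → Bool) :
    (1:ℝ) ∈ {r : ℝ | ∃ N : ℕ, (∀ t : ℤ, |t| < (N : ℤ) → x t = y t) ∧ r = (2 : ℝ) ^ (-(N : ℤ))} :=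
  ⟨0, fun t ht => absurd ht ((abs_nonneg t).not_gt), by norm_num⟩

lemma bdist_le {x y : ℤ → Bool} {N : ℕ} (h : ∀ t : ℤ, |t| < (N : ℤ) → x t = y t) :
    bdist x y ≤ (2:ℝ) ^ (-(N:ℤ)) :=
  csInf_le (bset_bdd x y) ⟨N, h, rfl⟩

lemma lt_of_bdist_lt {x y : ℤ → Bool} {r : ℝ} (h : bdist x y < r) :
    ∃ N : ℕ, (∀ t : ℤ, |t| < (N : ℤ) → x t = y t) ∧ (2:ℝ) ^ (-(N:ℤ)) < r := by
  obtain ⟨a, ⟨N, hN, ha⟩, har⟩ := exists_lt_of_csInf_lt ⟨1, bset_one x y⟩ h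
  exact ⟨N, hN, ha ▸ har⟩

lemma exists_pow_small {ε : ℝ} (hε : 0 < ε) : ∃ N : ℕ, (2:ℝ) ^ (-(N:ℤ)) < ε := by
  obtain ⟨n, hn⟩ := exists_pow_lt_of_lt_one hε (by norm_num : (1/2 : ℝ) < 1)
  refine ⟨n, ?_⟩
  have : ((1:ℝ)/2) ^ n = (2:ℝ) ^ (-(n:ℤ)) := by
    rw [zpow_neg, zpow_natCast, one_div, inv_pow]
  linarith [this ▸ hn]

lemma bdist_self (x : ℤ → Bool) : bdist x x = 0 := by
  refine le_antisymm ?_ (le_csInf ⟨1, bset_one x x⟩ fun r ⟨N, _, hr⟩ => hr ▸ by positivity)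
  by_contra h
  push_neg at h
  obtain ⟨N, hN⟩ := exists_pow_small h
  exact absurd (bdist_le (x := x) (y := x) fun t _ => rfl) (by linarith)

lemma bdist_eq_one {x y : ℤ → Bool} (h : x 0 ≠ y 0) : bdist x y = 1 := by
  have : {r : ℝ | ∃ N : ℕ, (∀ t : ℤ, |t| < (N : ℤ) → x t = y t) ∧ r = (2 : ℝ) ^ (-(N : ℤ))} = {1} := by
    ext r
    constructor
    · rintro ⟨N, hN, hr⟩
      rcases Nat.eq_zero_or_pos N with h0 | h0
      · subst h0; simpa using hr
      · exact absurd (hN 0 (by simpa using Int.natCast_pos.mpr h0)) h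
    · rintro rfl; exact bset_one x y
  rw [bdist, this, csInf_singleton]

lemma hIter_shift (n : ℤ) (x : ℤ → Bool) (m : ℤ) : hIter shiftH n x m = x (m + n) := by
  induction n using Int.induction_on generalizing x m with
  | zero => simp [hIter]
  | succ k ih =>
      have : hIter shiftH ((k:ℤ) + 1) x m = hIter shiftH (k:ℤ) (shiftH x) m := by
        simp only [hIter, zpow_add_one, Equiv.Perm.mul_apply]
        rfl
      rw [this, ih]
      show x (m + k + 1) = x (m + (k + 1))
      ring_nf
  | pred k ih =>
      have : hIter shiftH (-(k:ℤ) - 1) x m = hIter shiftH (-(k:ℤ)) (shiftH.symm x) m := by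
        simp only [hIter, zpow_sub_one, Equiv.Perm.mul_apply]
        rfl
      rw [this, ih]
      show x (m + -(k:ℤ) - 1) = x (m + (-(k:ℤ) - 1))
      ring_nf

lemma shift_expansive : ∀ x y : ℤ → Bool, x ≠ y →
    ∃ n : ℤ, (1/2:ℝ) < bdist (hIter shiftH n x) (hIter shiftH n y) := by
  intro x y hxy
  obtain ⟨t, ht⟩ := Function.ne_iff.mp hxy
  refine ⟨t, ?_⟩
  have h0 : hIter shiftH t x 0 ≠ hIter shiftH t y 0 := by
    rw [hIter_shift, hIter_shift]; simpa using ht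
  rw [bdist_eq_one h0]; norm_num

lemma hB_bdist (x : ℤ → Bool) {δ : ℝ} (hδ : 0 < δ) : ∀ᶠ y in 𝓝 x, bdist x y < δ := by
  obtain ⟨N, hN⟩ := exists_pow_small hδ
  have hA : (⋂ t ∈ Finset.Icc (-(N:ℤ)) N, {y : ℤ → Bool | y t = x t}) ∈ 𝓝 x := by
    rw [Filter.biInter_finset_mem]
    intro t _
    have hop : IsOpen {y : ℤ → Bool | y t = x t} :=
      (isOpen_discrete ({x t} : Set Bool)).preimage (continuous_apply (A := fun _ : ℤ => Bool) t)
    exact hop.mem_nhds rfl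
  refine Filter.eventually_iff_exists_mem.mpr ⟨_, hA, fun y hy => ?_⟩
  simp only [Set.mem_iInter, Set.mem_setOf_eq] at hy
  have hxy : ∀ t : ℤ, |t| < (N:ℤ) → x t = y t := by
    intro t ht
    obtain ⟨h1, h2⟩ := abs_lt.mp ht
    exact (hy t (Finset.mem_Icc.mpr ⟨le_of_lt h1, le_of_lt h2⟩)).symm
  exact lt_of_le_of_lt (bdist_le hxy) hN

lemma hC_bdist (x : ℤ → Bool) (U : Set (ℤ → Bool)) (hU : U ∈ 𝓝 x) :
    ∃ δ > (0:ℝ), ∀ y, bdist x y < δ → y ∈ U := by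
  by_contra h
  push_neg at h
  have hch : ∀ N : ℕ, ∃ y, bdist x y < (2:ℝ)^(-(N:ℤ)) ∧ y ∉ U := by
    intro N
    obtain ⟨y, hy1, hy2⟩ := h ((2:ℝ)^(-(N:ℤ))) (by positivity)
    exact ⟨y, hy1, hy2⟩
  choose y hy1 hy2 using hch
  have htend : Tendsto y atTop (𝓝 x) := by
    rw [tendsto_pi_nhds]
    intro t
    have hev : ∀ᶠ N : ℕ in atTop, y N t = x t := by
      filter_upwards [eventually_ge_atTop (t.natAbs + 1)] with N hNt
      obtain ⟨M, hM1, hM2⟩ := lt_of_bdist_lt (hy1 N)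
      have hMN : (N:ℤ) < (M:ℤ) := by
        have := (zpow_lt_zpow_iff_right₀ (by norm_num : (1:ℝ) < 2)).mp hM2
        omega
      have habs : |t| < (M:ℤ) := by
        rw [Int.abs_eq_natAbs]
        omega
      exact (hM1 t habs).symm
    exact Tendsto.congr' (hev.mono fun N h => h.symm) tendsto_const_nhds
  have hev2 : ∀ᶠ N in atTop, y N ∈ U := htend hU
  obtain ⟨N, hNU⟩ := hev2.exists
  exact hy2 N hNU

theorem countable_of_hae {X : Type*} [TopologicalSpace X] [SecondCountableTopology X]
    (d : X → X → ℝ) (T : X ≃ₜ X) {ε : ℝ} (hε : 0 < ε)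
    (hB : ∀ x : X, ∀ δ : ℝ, 0 < δ → ∀ᶠ y in 𝓝 x, d x y < δ)
    (hexp : ∀ x y : X, x ≠ y → ∃ n : ℤ, ε < d (hIter T n x) (hIter T n y))
    (Z : Set X) (hZc : IsClosed Z) (hZi : ⇑T '' Z = Z)
    (h : HAEOn d T Z) : Z.Countable := by
  by_contra hunc
  set P : Set X := {x | ∀ U ∈ 𝓝 x, ¬(U ∩ Z).Countable} with hP
  have hdiff : (Z \ P).Countable := by
    have hsub : Z \ P ⊆ ⋃ V ∈ {V ∈ TopologicalSpace.countableBasis X | (V ∩ Z).Countable}, V ∩ Z := by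
      rintro x ⟨hxZ, hxP⟩
      simp only [hP, Set.mem_setOf_eq, not_forall] at hxP
      obtain ⟨U, hU, hUc⟩ := hxP
      rw [not_not] at hUc
      obtain ⟨V, hVb, hxV, hVU⟩ := (TopologicalSpace.isBasis_countableBasis X).mem_nhds_iff.mp hU
      exact Set.mem_biUnion ⟨hVb, hUc.mono (Set.inter_subset_inter_left _ hVU)⟩ ⟨hxV, hxZ⟩
    exact Set.Countable.mono hsub
      (Set.Countable.biUnion
        (((TopologicalSpace.countable_countableBasis X).mono (Set.sep_subset _ _)))
        fun V hV => hV.2)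
  have hPZ : P ⊆ Z := by
    intro x hx
    by_contra hxZ
    exact hx Zᶜ (hZc.isOpen_compl.mem_nhds hxZ) (by simp)
  have hPne : P.Nonempty := by
    rcases Set.eq_empty_or_nonempty P with hPe | hne
    · exact absurd (by simpa [hPe] using hdiff) hunc
    · exact hne
  have hPc : IsClosed P := by
    rw [← isOpen_compl_iff, isOpen_iff_mem_nhds]
    intro x hx
    simp only [hP, Set.mem_compl_iff, Set.mem_setOf_eq, not_forall, not_not] at hx
    obtain ⟨U, hU, hUc⟩ := hx
    obtain ⟨V, hVU, hVo, hxV⟩ := mem_nhds_iff.mp hU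
    refine Filter.mem_of_superset (hVo.mem_nhds hxV) fun z hz => ?_
    simp only [Set.mem_compl_iff, hP, Set.mem_setOf_eq, not_forall, not_not]
    exact ⟨V, hVo.mem_nhds hz, hUc.mono (Set.inter_subset_inter_left _ hVU)⟩
  have hmap : ∀ (S : X ≃ₜ X), ⇑S '' Z = Z → ∀ x ∈ P, S x ∈ P := by
    intro S hS x hx U hU hc
    have h1 : (⇑S ⁻¹' U) ∈ 𝓝 x := S.continuous.continuousAt.preimage_mem_nhds hU
    refine hx _ h1 ?_
    have hZpre : ⇑S ⁻¹' Z = Z := by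
      conv_lhs => rw [← hS]
      rw [Set.preimage_image_eq _ S.injective]
    have h2 : ⇑S ⁻¹' U ∩ Z = ⇑S ⁻¹' (U ∩ Z) := by
      rw [Set.preimage_inter, hZpre]
    rw [h2]
    exact hc.preimage S.injective
  have hZi' : ⇑T.symm '' Z = Z := by
    conv_lhs => rw [← hZi, ← Set.image_comp]
    simp
  have hPi : ⇑T '' P = P := by
    apply Set.Subset.antisymm
    · rintro _ ⟨x, hx, rfl⟩
      exact hmap T hZi x hx
    · intro x hx
      exact ⟨T.symm x, hmap T.symm hZi' x hx, T.apply_symm_apply x⟩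
  have hperf : ∀ x ∈ P, ∀ U ∈ 𝓝 x, ∃ y, y ∈ U ∩ P ∧ y ≠ x := by
    intro x hx U hU
    have h1 : ¬(U ∩ Z).Countable := hx U hU
    have h2 : ¬(U ∩ Z ∩ P).Countable := by
      intro hc
      apply h1
      have hsub : U ∩ Z ⊆ (U ∩ Z ∩ P) ∪ (Z \ P) := by
        rintro z ⟨hzU, hzZ⟩
        by_cases hzP : z ∈ P
        · exact Or.inl ⟨⟨hzU, hzZ⟩, hzP⟩
        · exact Or.inr ⟨hzZ, hzP⟩
      exact Set.Countable.mono hsub (hc.union hdiff)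
    have h3 : ¬(U ∩ Z ∩ P ⊆ {x}) := fun hsub => h2 ((Set.countable_singleton x).mono hsub)
    obtain ⟨y, hy, hyx⟩ := Set.not_subset.mp h3
    exact ⟨y, ⟨hy.1.1, hy.2⟩, hyx⟩
  have hAE := h P hPZ hPne hPc hPi
  obtain ⟨x0, hx0⟩ := hPne
  have hx0' := hAE hx0
  have hempty : {x ∈ P | EqPt d (hIter T) P x} = ∅ := by
    ext x
    simp only [Set.mem_setOf_eq, Set.mem_empty_iff_false, iff_false, not_and]
    intro hxP heq
    obtain ⟨δ, hδ, hδ'⟩ := heq ε hε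
    obtain ⟨y, ⟨hyU, hyP⟩, hyx⟩ := hperf x hxP {y | d x y < δ} (hB x δ hδ)
    obtain ⟨n, hn⟩ := hexp x y (Ne.symm hyx)
    exact absurd (hδ' y hyP hyU n) (not_lt.mpr hn.le)
  rw [hempty, closure_empty] at hx0'
  exact hx0'

theorem hae_of_countable {X : Type*} [TopologicalSpace X] [T2Space X] [CompactSpace X]
    (d : X → X → ℝ) (T : X ≃ₜ X)
    (hd0 : ∀ x : X, d x x = 0)
    (hC : ∀ x : X, ∀ U ∈ 𝓝 x, ∃ δ : ℝ, 0 < δ ∧ ∀ y, d x y < δ → y ∈ U)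
    (Z : Set X) (hZ : Z.Countable) : HAEOn d T Z := by
  intro Y hYZ _hYne hYc _hYi
  intro x hxY
  rw [mem_closure_iff]
  intro U hUo hxU
  obtain ⟨V, hVnhds, hVc, hVU⟩ := exists_mem_nhds_isClosed_subset (hUo.mem_nhds hxU)
  set V' := interior V with hV'
  have hxV' : x ∈ V' := mem_interior_iff_mem_nhds.mpr hVnhds
  set K := closure (V' ∩ Y) with hK
  have hKY : K ⊆ Y := (closure_mono Set.inter_subset_right).trans hYc.closure_eq.subset
  have hKU : K ⊆ U := by
    intro z hz
    have h1 : z ∈ closure V := closure_mono (fun w hw => interior_subset hw.1) hz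
    rw [hVc.closure_eq] at h1
    exact hVU h1
  have hKc : IsClosed K := isClosed_closure
  haveI hKcpt : CompactSpace K := isCompact_iff_compactSpace.mp hKc.isCompact
  have hKcount : K.Countable := ((hZ.mono hYZ).mono hKY)
  haveI := hKcount.to_subtype
  have hxK : x ∈ K := subset_closure ⟨hxV', hxY⟩
  haveI : Nonempty K := ⟨⟨x, hxK⟩⟩
  have hcover : ⋃ i : K, ({i} : Set K) = Set.univ := by
    simp [Set.eq_univ_iff_forall]
  obtain ⟨i, hi⟩ := nonempty_interior_of_iUnion_of_closed
    (fun i : K => isClosed_singleton) hcover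
  have hio : IsOpen ({i} : Set K) := by
    have heq : interior ({i} : Set K) = {i} := by
      apply Set.Subset.antisymm interior_subset
      obtain ⟨j, hj⟩ := hi
      have hji : j = i := Set.mem_singleton_iff.mp (interior_subset hj)
      rw [hji] at hj
      exact Set.singleton_subset_iff.mpr hj
    rw [← heq]
    exact isOpen_interior
  obtain ⟨W, hWo, hWK⟩ := isOpen_induced_iff.mp hio
  set y0 : X := (i : X) with hy0
  have hy0K : y0 ∈ K := i.2
  have hy0W : y0 ∈ W := by
    have : (i : K) ∈ Subtype.val ⁻¹' W := by rw [hWK]; rfl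
    exact this
  have hWcapK : ∀ z, z ∈ W → z ∈ K → z = y0 := by
    intro z hzW hzK
    have h1 : (⟨z, hzK⟩ : K) ∈ Subtype.val ⁻¹' W := hzW
    rw [hWK] at h1
    exact congrArg Subtype.val h1
  have hy0VY : y0 ∈ V' ∩ Y := by
    obtain ⟨z, hzW, hzVY⟩ := mem_closure_iff.mp hy0K W hWo hy0W
    have hz0 : z = y0 := hWcapK z hzW (subset_closure hzVY)
    rwa [← hz0]
  have hiso : ∀ z ∈ Y, z ∈ W ∩ V' → z = y0 := by
    rintro z hzY ⟨hzW, hzV'⟩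
    exact hWcapK z hzW (subset_closure ⟨hzV', hzY⟩)
  have hEq : EqPt d (hIter T) Y y0 := by
    intro ε hε
    obtain ⟨δ, hδ, hδ'⟩ := hC y0 (W ∩ V') ((hWo.inter isOpen_interior).mem_nhds ⟨hy0W, hy0VY.1⟩)
    refine ⟨δ, hδ, fun y hyY hyd n => ?_⟩
    have hyy0 : y = y0 := hiso y hyY (hδ' y hyd)
    rw [hyy0, hd0 (hIter T n y0)]
    exact hε
  exact ⟨y0, hKU hy0K, hy0VY.2, hEq⟩

theorem part1 (X : Type) [MetricSpace X] [CompactSpace X] [Nonempty X] (T : X ≃ₜ X)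
    (hexp : ∃ ε > (0:ℝ), ∀ x y : X, x ≠ y → ∃ n : ℤ, ε < dist (hIter T n x) (hIter T n y)) :
    HAEOn dist T Set.univ ↔ Countable X := by
  constructor
  · intro h
    obtain ⟨ε, hε, hx⟩ := hexp
    have hB : ∀ x : X, ∀ δ : ℝ, 0 < δ → ∀ᶠ y in 𝓝 x, dist x y < δ := by
      intro x δ hδ
      filter_upwards [Metric.ball_mem_nhds x hδ] with y hy
      rw [dist_comm]
      exact hy
    have hc := countable_of_hae dist T hε hB hx Set.univ isClosed_univ
      (Set.image_univ_of_surjective T.surjective) h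
    rwa [Set.countable_univ_iff] at hc
  · intro hcount
    refine hae_of_countable dist T dist_self (fun x U hU => ?_) Set.univ Set.countable_univ
    obtain ⟨δ, hδ, hsub⟩ := Metric.mem_nhds_iff.mp hU
    exact ⟨δ, hδ, fun y hy => hsub (by rwa [Metric.mem_ball, dist_comm])⟩

theorem part2 (Z : Set (ℤ → Bool)) (hcl : IsClosed Z) (hinv : ⇑shiftH '' Z = Z) :
    HAEOn bdist shiftH Z ↔ Z.Countable := by
  constructor
  · intro h
    exact countable_of_hae bdist shiftH (by norm_num : (0:ℝ) < 1/2)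
      (fun x δ hδ => hB_bdist x hδ) shift_expansive Z hcl hinv h
  · intro hc
    refine hae_of_countable bdist shiftH bdist_self (fun x U hU => ?_) Z hc
    obtain ⟨δ, hδ, hs⟩ := hC_bdist x U hU
    exact ⟨δ, hδ, hs⟩

/-- An expansive compact metric system is hereditarily almost equicontinuous iff the space is
countable; in particular, a subshift of `{0,1}^ℤ` is hereditarily almost equicontinuous iff it
is countable. -/
theorem stmt2 :
    (∀ (X : Type) [MetricSpace X] [CompactSpace X] [Nonempty X] (T : X ≃ₜ X),
      (∃ ε > (0 : ℝ), ∀ x y : X, x ≠ y → ∃ n : ℤ, ε < dist (hIter T n x) (hIter T n y)) →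
      (HAEOn dist T Set.univ ↔ Countable X)) ∧
    (∀ Z : Set (ℤ → Bool), Z.Nonempty → IsClosed Z → ⇑shiftH '' Z = Z →
      (HAEOn bdist shiftH Z ↔ Z.Countable)) := by
  exact ⟨fun X _ _ _ T hexp => part1 X T hexp, fun Z _ hcl hinv => part2 Z hcl hinv⟩
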